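/- Let M be a matroid on a finite ground set E and let ω ∈ ℝ^E. Then ω lies in the Bergman fan B̃(M) if and only if for every r ∈ ℝ the sublevel set {e ∈ E : ω_e ≤ r} is a flat of M. -/

import Mathlib

open scoped Classical

variable {α : Type*}

/-- The ω-weight of a set of elements: the sum of ω over the set. -/
noncomputable def wSum (ω : α → ℝ) (B : Set α) : ℝ := ∑ᶠ e ∈ B, ω e

/-- `B` is an ω-minimum basis of `M`: a basis whose ω-weight is minimum among all bases. -/
def IsMinBase [Fintype α] (M : Matroid α) (ω : α → ℝ) (B : Set α) : Prop :=
  M.IsBase B ∧ ∀ B' : Set α, M.IsBase B' → wSum ω B ≤ wSum ω B'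

/-- `ω` lies in the Bergman fan of `M`: every element lies in some ω-minimum basis. -/
def InBergmanFan [Fintype α] (M : Matroid α) (ω : α → ℝ) : Prop :=
  ∀ e : α, ∃ B : Set α, IsMinBase M ω B ∧ e ∈ B

/-- `C` is a circuit of `M`: a minimal dependent set. -/
def IsCircuit (M : Matroid α) (C : Set α) : Prop := Minimal M.Dep C

/-- A cocircuit of `M` is a circuit of the dual matroid `M✶`. -/
def IsCocircuit (M : Matroid α) (C : Set α) : Prop := IsCircuit M✶ C

lemma wSum_insert [Fintype α] (ω : α → ℝ) {a : α} {B : Set α} (h : a ∉ B) :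
    wSum ω (insert a B) = ω a + wSum ω B :=
  finsum_mem_insert _ h (Set.toFinite _)

lemma wSum_diff [Fintype α] (ω : α → ℝ) {a : α} {B : Set α} (h : a ∈ B) :
    wSum ω B = ω a + wSum ω (B \ {a}) := by
  have h1 : insert a (B \ {a}) = B := by
    rw [Set.insert_diff_singleton, Set.insert_eq_self.mpr h]
  conv_lhs => rw [← h1]
  exact wSum_insert ω (fun hc => hc.2 rfl)

/-- A minimum-weight base exists. -/
lemma exists_isMinBase [Fintype α] (M : Matroid α) (ω : α → ℝ) :
    ∃ B : Set α, IsMinBase M ω B := by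
  obtain ⟨B₀, hB₀⟩ := M.exists_isBase
  have hne : (Finset.univ.filter (fun B : Set α => M.IsBase B)).Nonempty :=
    ⟨B₀, by simp [hB₀]⟩
  obtain ⟨B, hBmem, hmin⟩ := Finset.exists_min_image _ (wSum ω) hne
  refine ⟨B, (Finset.mem_filter.mp hBmem).2, fun B' hB' => hmin B' (by simp [hB'])⟩

/-- If `B` is a minimum base containing `e` and all elements of `S` are strictly lighter
than `e`, then `e ∉ M.closure S`. -/
lemma key_not_mem_closure [Fintype α] {M : Matroid α} (hE : M.E = Set.univ) {ω : α → ℝ}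
    {B : Set α} {e : α} (hB : IsMinBase M ω B) (heB : e ∈ B) {S : Set α}
    (hS : ∀ f ∈ S, ω f < ω e) (he : e ∈ M.closure S) : False := by
  have hground : ∀ X : Set α, X ⊆ M.E := fun X => by rw [hE]; exact Set.subset_univ X
  -- (B \ {e}) ∪ S is spanning
  have hBsub : B ⊆ M.closure ((B \ {e}) ∪ S) := by
    intro x hx
    by_cases hxe : x = e
    · subst hxe
      exact M.closure_subset_closure Set.subset_union_right he
    · exact (M.subset_closure _ (hground _)) (Set.mem_union_left _ ⟨hx, hxe⟩)
  have hsp : M.Spanning ((B \ {e}) ∪ S) := by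
    rw [Matroid.spanning_iff_closure_eq (hground _)]
    refine (M.closure_subset_ground _).antisymm ?_
    have h1 : M.closure B ⊆ M.closure ((B \ {e}) ∪ S) := by
      refine Matroid.closure_subset_closure_of_subset_closure hBsub
    rw [hB.1.closure_eq] at h1
    exact h1
  -- extend B \ {e} to a base inside it
  have hindep : M.Indep (B \ {e}) := hB.1.indep.subset Set.diff_subset
  obtain ⟨B', hB'basis, hsubB'⟩ :=
    hindep.subset_isBasis_of_subset (Set.subset_union_left : B \ {e} ⊆ (B \ {e}) ∪ S) (hground _)
  have hB' : M.IsBase B' := by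
    refine hB'basis.indep.isBase_of_spanning ?_
    rw [Matroid.spanning_iff_closure_eq (hground _), hB'basis.closure_eq_closure]
    exact hsp.closure_eq
  -- find the new element f
  have hne : B' ≠ B \ {e} := by
    intro h
    subst h
    have h2 := hB'.eq_of_subset_isBase hB.1 Set.diff_subset
    rw [← h2] at heB
    exact heB.2 rfl
  obtain ⟨f, hfB', hfnot⟩ := Set.exists_of_ssubset (hsubB'.ssubset_of_ne (Ne.symm hne))
  have hfS : f ∈ S := (hB'basis.subset hfB').resolve_left hfnot
  have hfw : ω f < ω e := hS f hfS
  -- B' = insert f (B \ {e})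
  have hcard : B'.encard = (insert f (B \ {e})).encard := by
    rw [Set.encard_insert_of_notMem hfnot, hB'.encard_eq_encard_of_isBase hB.1]
    conv_lhs => rw [show B = insert e (B \ {e}) by
      rw [Set.insert_diff_singleton, Set.insert_eq_self.mpr heB]]
    rw [Set.encard_insert_of_notMem (fun hc => hc.2 rfl)]
  have hBeq : insert f (B \ {e}) = B' := by
    refine (Set.toFinite _).eq_of_subset_of_encard_le ?_ hcard.le
    exact Set.insert_subset hfB' hsubB'
  -- weight comparison
  have hw : wSum ω B' < wSum ω B := by
    rw [← hBeq, wSum_insert ω hfnot, wSum_diff ω heB]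
    linarith
  exact absurd (hB.2 B' hB') (not_le.mpr hw)

/-- From the flats condition: no element is in the closure of the strictly-lighter elements. -/
lemma not_mem_closure_lighter [Fintype α] {M : Matroid α} {ω : α → ℝ}
    (hyp : ∀ r : ℝ, M.closure {e : α | ω e ≤ r} = {e : α | ω e ≤ r}) (e : α) :
    e ∉ M.closure {f : α | ω f < ω e} := by
  have hr : ∃ r : ℝ, r < ω e ∧ ∀ f, ω f < ω e → ω f ≤ r := by
    set s : Finset ℝ := (Finset.univ.filter (fun f : α => ω f < ω e)).image ω with hs
    by_cases hne : s.Nonempty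
    · refine ⟨s.max' hne, ?_, fun f hf => Finset.le_max' s _
        (Finset.mem_image.mpr ⟨f, Finset.mem_filter.mpr ⟨Finset.mem_univ f, hf⟩, rfl⟩)⟩
      obtain ⟨f, hf, hfe⟩ := Finset.mem_image.mp (s.max'_mem hne)
      rw [← hfe]
      exact (Finset.mem_filter.mp hf).2
    · refine ⟨ω e - 1, by linarith, fun f hf => absurd
        ⟨ω f, Finset.mem_image.mpr ⟨f, Finset.mem_filter.mpr ⟨Finset.mem_univ f, hf⟩, rfl⟩⟩ hne⟩
  obtain ⟨r, hre, hrle⟩ := hr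
  intro hc
  have h1 : M.closure {f : α | ω f < ω e} ⊆ M.closure {f : α | ω f ≤ r} :=
    M.closure_subset_closure (fun f hf => hrle f hf)
  have h2 : e ∈ {f : α | ω f ≤ r} := (hyp r) ▸ h1 hc
  exact absurd h2 (by simp; linarith)

/-- ω lies in the Bergman fan of M iff for every r ∈ ℝ the sublevel
set {e : ω_e ≤ r} is a flat of M (i.e. is equal to its closure). -/
theorem stmt11 [Fintype α] (M : Matroid α) (hE : M.E = Set.univ) (ω : α → ℝ) :
    InBergmanFan M ω ↔
      ∀ r : ℝ, M.closure {e : α | ω e ≤ r} = {e : α | ω e ≤ r} := by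
  have hground : ∀ X : Set α, X ⊆ M.E := fun X => by rw [hE]; exact Set.subset_univ X
  constructor
  · -- Bergman fan → flats
    intro hBF r
    refine Set.Subset.antisymm ?_ (M.subset_closure _ (hground _))
    intro e he
    by_contra hre
    simp only [Set.mem_setOf_eq, not_le] at hre
    obtain ⟨B, hB, heB⟩ := hBF e
    exact absurd he (fun hc =>
      key_not_mem_closure hE hB heB (fun f hf => lt_of_le_of_lt hf hre) hc)
  · -- flats → Bergman fan
    intro hyp e
    obtain ⟨B, hB⟩ := exists_isMinBase M ω
    by_cases heB : e ∈ B
    · exact ⟨B, hB, heB⟩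
    -- e ∉ B: swap in e for a heavier element
    set B₁ : Set α := {f ∈ B | ω f < ω e} with hB₁def
    have hnotcl : e ∉ M.closure B₁ := by
      intro hc
      exact not_mem_closure_lighter hyp e
        (M.closure_subset_closure (fun f hf => hf.2) hc)
    -- choose a minimal Y ⊆ B \ B₁ with e ∈ closure (B₁ ∪ Y)
    have hBcl : e ∈ M.closure B := by
      rw [hB.1.closure_eq, hE]; exact Set.mem_univ e
    have hmemt : (B \ B₁) ∈ Finset.univ.filter
        (fun Y : Set α => Y ⊆ B \ B₁ ∧ e ∈ M.closure (B₁ ∪ Y)) := by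
      simp only [Finset.mem_filter, Finset.mem_univ, true_and]
      refine ⟨subset_rfl, ?_⟩
      have : B₁ ∪ (B \ B₁) = B := Set.union_diff_cancel (fun f hf => hf.1)
      rwa [this]
    obtain ⟨Y, hYmem, hYmin⟩ := Finset.exists_min_image _ (fun Y : Set α => Y.ncard)
      ⟨_, hmemt⟩
    simp only [Finset.mem_filter, Finset.mem_univ, true_and] at hYmem
    obtain ⟨hYsub, hYcl⟩ := hYmem
    have hYne : Y.Nonempty := by
      rcases Set.eq_empty_or_nonempty Y with h | h
      · rw [h, Set.union_empty] at hYcl; exact absurd hYcl hnotcl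
      · exact h
    obtain ⟨f, hfY⟩ := hYne
    have hfB : f ∈ B := (hYsub hfY).1
    have hfw : ω e ≤ ω f := le_of_not_gt (fun hc => (hYsub hfY).2 ⟨hfB, hc⟩)
    -- minimality: e ∉ closure (B₁ ∪ (Y \ {f}))
    have hnotcl' : e ∉ M.closure (B₁ ∪ (Y \ {f})) := by
      intro hc
      have hmem' : (Y \ {f}) ∈ Finset.univ.filter
          (fun Z : Set α => Z ⊆ B \ B₁ ∧ e ∈ M.closure (B₁ ∪ Z)) := by
        simp only [Finset.mem_filter, Finset.mem_univ, true_and]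
        exact ⟨(Set.diff_subset).trans hYsub, hc⟩
      have hlt : (Y \ {f}).ncard < Y.ncard :=
        Set.ncard_diff_singleton_lt_of_mem hfY (Set.toFinite _)
      exact absurd (hYmin _ hmem') (not_le.mpr hlt)
    have hins : B₁ ∪ Y = insert f (B₁ ∪ (Y \ {f})) := by
      rw [Set.union_comm B₁, Set.union_comm B₁, ← Set.insert_union,
        Set.insert_diff_singleton, Set.insert_eq_self.mpr hfY]
    have hfcl : f ∈ M.closure (insert e (B₁ ∪ (Y \ {f}))) :=
      Matroid.mem_closure_insert hnotcl' (by rw [← hins]; exact hYcl)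
    -- insert e (B \ {f}) is spanning
    have hsubBf : insert e (B₁ ∪ (Y \ {f})) ⊆ insert e (B \ {f}) := by
      refine Set.insert_subset_insert ?_
      rintro x (hx | hx)
      · exact ⟨hx.1, fun hc => (hYsub hfY).2 (hc ▸ hx)⟩
      · exact ⟨(hYsub hx.1).1, hx.2⟩
    have hfcl2 : f ∈ M.closure (insert e (B \ {f})) :=
      M.closure_subset_closure hsubBf hfcl
    have hBsub : B ⊆ M.closure (insert e (B \ {f})) := by
      intro x hx
      by_cases hxf : x = f
      · exact hxf ▸ hfcl2
      · exact (M.subset_closure _ (hground _)) (Set.mem_insert_of_mem _ ⟨hx, hxf⟩)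
    have hsp : M.Spanning (insert e (B \ {f})) := by
      rw [Matroid.spanning_iff_closure_eq (hground _)]
      refine (M.closure_subset_ground _).antisymm ?_
      have h1 : M.closure B ⊆ M.closure (insert e (B \ {f})) :=
        Matroid.closure_subset_closure_of_subset_closure hBsub
      rw [hB.1.closure_eq] at h1
      exact h1
    obtain ⟨B', hB', hB'sub⟩ := hsp.exists_isBase_subset
    have henot : e ∉ B \ {f} := fun hc => heB hc.1
    have hcard : (insert e (B \ {f})).encard = B'.encard := by
      rw [Set.encard_insert_of_notMem henot, hB'.encard_eq_encard_of_isBase hB.1]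
      conv_rhs => rw [show B = insert f (B \ {f}) by
        rw [Set.insert_diff_singleton, Set.insert_eq_self.mpr hfB]]
      rw [Set.encard_insert_of_notMem (fun hc => hc.2 rfl)]
    have hBeq : B' = insert e (B \ {f}) :=
      ((Set.toFinite _).eq_of_subset_of_encard_le hB'sub hcard.le)
    have hwle : wSum ω B' ≤ wSum ω B := by
      rw [hBeq, wSum_insert ω henot, wSum_diff ω hfB]
      linarith
    exact ⟨B', ⟨hB', fun B'' hB'' => hwle.trans (hB.2 B'' hB'')⟩,
      hBeq ▸ Set.mem_insert e _⟩
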